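/- (Fenichel uniformity theorem for constrained switched linear systems.) Let d ≥ 1, let I be a metric space, let S : I → Matrix d d ℂ be continuous, and let Λ ⊆ Σ_I^+ be a nonempty compact θ_+-invariant subset. Then S is Λ-absolutely asymptotically stable (i.e. S_{i_n}···S_{i_1} → 0 as n → ∞ for every i(·) ∈ Λ) if and only if S is Λ-uniformly exponentially stable, i.e. there exist λ ∈ (0,1) and an integer N ≥ 1 such that ‖S_{i_n}···S_{i_1}‖ ≤ λ^n for all i(·) ∈ Λ and all n ≥ N. -/

import Mathlib

open Filter Topology MeasureTheory

set_option maxHeartbeats 1000000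
set_option synthInstance.maxHeartbeats 1000000

/-- Operator norm on `d × d` complex matrices induced by the Euclidean norm on `ℂ^d`. -/
noncomputable def opNorm {d : ℕ} (A : Matrix (Fin d) (Fin d) ℂ) : ℝ :=
  ‖Matrix.toEuclideanCLM (𝕜 := ℂ) A‖

/-- `prodS S x n = S_{i_n} ⋯ S_{i_1}` where `i_k = x (k-1)`. -/
noncomputable def prodS {d : ℕ} {I : Type*} (S : I → Matrix (Fin d) (Fin d) ℂ)
    (x : ℕ → I) : ℕ → Matrix (Fin d) (Fin d) ℂ
  | 0 => 1
  | n + 1 => S (x n) * prodS S x n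

/-- `Λ` is invariant under the one-sided shift `θ₊`. -/
def ShiftInv {I : Type*} (Λ : Set (ℕ → I)) : Prop :=
  ∀ x ∈ Λ, (fun n => x (n + 1)) ∈ Λ

/-- Joint spectral radius of `S` restricted to `Λ`. -/
noncomputable def jsr {d : ℕ} {I : Type*} (S : I → Matrix (Fin d) (Fin d) ℂ)
    (Λ : Set (ℕ → I)) : ℝ :=
  Filter.limsup (fun n : ℕ => ⨆ x : Λ, opNorm (prodS S x.1 n) ^ (1 / (n : ℝ))) Filter.atTop

/-! ### Auxiliary lemmas -/

noncomputable def euclidCLM (d : ℕ) :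
    Matrix (Fin d) (Fin d) ℂ ≃ₗ[ℂ] (EuclideanSpace ℂ (Fin d) →L[ℂ] EuclideanSpace ℂ (Fin d)) :=
  Matrix.toEuclideanLin.trans LinearMap.toContinuousLinearMap

lemma euclidCLM_eq {d : ℕ} (A : Matrix (Fin d) (Fin d) ℂ) :
    euclidCLM d A = Matrix.toEuclideanCLM (𝕜 := ℂ) A := rfl

lemma opNorm_eq {d : ℕ} (A : Matrix (Fin d) (Fin d) ℂ) : opNorm A = ‖euclidCLM d A‖ := rfl

lemma opNorm_nonneg {d : ℕ} (A : Matrix (Fin d) (Fin d) ℂ) : 0 ≤ opNorm A :=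
  norm_nonneg _

lemma opNorm_mul_le {d : ℕ} (A B : Matrix (Fin d) (Fin d) ℂ) :
    opNorm (A * B) ≤ opNorm A * opNorm B := by
  unfold opNorm
  rw [map_mul]
  exact norm_mul_le _ _

lemma opNorm_continuous {d : ℕ} : Continuous (opNorm (d := d)) := by
  have h : Continuous (euclidCLM d) := (euclidCLM d).toLinearMap.continuous_of_finiteDimensional
  exact h.norm

lemma prodS_continuous {d : ℕ} {I : Type*} [MetricSpace I]
    (S : I → Matrix (Fin d) (Fin d) ℂ) (hS : Continuous S) (n : ℕ) :
    Continuous fun x : ℕ → I => prodS S x n := by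
  induction n with
  | zero => exact continuous_const
  | succ n ih =>
    exact (hS.comp (continuous_apply n)).matrix_mul ih

lemma prodS_add {d : ℕ} {I : Type*} (S : I → Matrix (Fin d) (Fin d) ℂ)
    (x : ℕ → I) (n m : ℕ) :
    prodS S x (n + m) = prodS S (fun k => x (k + n)) m * prodS S x n := by
  induction m with
  | zero => simp [prodS]
  | succ m ih =>
    have : n + (m + 1) = (n + m) + 1 := by ring
    rw [this]
    show S (x (n + m)) * prodS S x (n + m) = _
    rw [ih]
    show _ = (S (x (m + n)) * prodS S (fun k => x (k + n)) m) * prodS S x n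
    rw [Nat.add_comm m n, mul_assoc]

lemma shift_mem {I : Type*} {Λ : Set (ℕ → I)} (hinv : ShiftInv Λ) (n : ℕ) :
    ∀ x ∈ Λ, (fun k => x (k + n)) ∈ Λ := by
  induction n with
  | zero => intro x hx; simpa using hx
  | succ n ih =>
    intro x hx
    have h1 : (fun k => x (k + 1)) ∈ Λ := hinv x hx
    have h2 := ih _ h1
    have : (fun k => (fun j => x (j + 1)) (k + n)) = fun k => x (k + (n + 1)) := by
      funext k; simp [Nat.add_assoc]
    rwa [this] at h2

/-- **Fenichel uniformity theorem (Lemma 3.3).** `S` is `Λ`-absolutely asymptotically stable iff it is `Λ`-uniformly exponentially stable. -/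
theorem abs_asymp_stable_iff_unif_exp_stable {d : ℕ} (hd : 1 ≤ d) {I : Type*} [MetricSpace I]
    (S : I → Matrix (Fin d) (Fin d) ℂ) (hS : Continuous S)
    (Λ : Set (ℕ → I)) (hne : Λ.Nonempty) (hcomp : IsCompact Λ) (hinv : ShiftInv Λ) :
    (∀ x ∈ Λ, Filter.Tendsto (fun n : ℕ => prodS S x n) Filter.atTop (nhds 0)) ↔
      ∃ l : ℝ, 0 < l ∧ l < 1 ∧ ∃ N : ℕ, 1 ≤ N ∧
        ∀ x ∈ Λ, ∀ n : ℕ, N ≤ n → opNorm (prodS S x n) ≤ l ^ n := by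
  constructor
  · -- hard direction
    intro h
    -- Step 1: for each x ∈ Λ there is n ≥ 1 with opNorm (prodS S x n) < 1/2
    have step1 : ∀ x ∈ Λ, ∃ n : ℕ, 1 ≤ n ∧ opNorm (prodS S x n) < 1 / 2 := by
      intro x hx
      have h0 : Filter.Tendsto (fun n : ℕ => opNorm (prodS S x n)) atTop (nhds 0) := by
        have := (opNorm_continuous (d := d)).tendsto (0 : Matrix (Fin d) (Fin d) ℂ)
        have h2 := this.comp (h x hx)
        simpa [opNorm, map_zero, Function.comp_def] using h2
      have hev : ∀ᶠ n : ℕ in atTop, opNorm (prodS S x n) < 1 / 2 :=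
        h0.eventually (Filter.Tendsto.eventually_lt_const (by norm_num) tendsto_id)
      obtain ⟨N0, hN0⟩ := eventually_atTop.1 hev
      exact ⟨max 1 N0, le_max_left _ _, hN0 _ (le_max_right _ _)⟩
    -- Step 2: finite subcover gives uniform M
    set U : ℕ → Set (ℕ → I) := fun m => {x | opNorm (prodS S x (m + 1)) < 1 / 2} with hU
    have hUopen : ∀ m, IsOpen (U m) := by
      intro m
      exact isOpen_lt ((opNorm_continuous).comp (prodS_continuous S hS (m + 1))) continuous_const
    have hcover : Λ ⊆ ⋃ m : ℕ, U m := by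
      intro x hx
      obtain ⟨n, hn1, hn⟩ := step1 x hx
      obtain ⟨m, rfl⟩ := Nat.exists_eq_add_of_le hn1
      exact Set.mem_iUnion.2 ⟨m, by simpa [U, Nat.add_comm] using hn⟩
    obtain ⟨t, ht⟩ := hcomp.elim_finite_subcover U hUopen hcover
    set M : ℕ := t.sup id + 1 with hM
    have hM1 : 1 ≤ M := Nat.le_add_left 1 _
    have hM0 : 0 < M := hM1
    have cover : ∀ x ∈ Λ, ∃ m : ℕ, 1 ≤ m ∧ m ≤ M ∧ opNorm (prodS S x m) < 1 / 2 := by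
      intro x hx
      obtain ⟨m, hmt, hmU⟩ := Set.mem_iUnion₂.1 (ht hx)
      refine ⟨m + 1, Nat.le_add_left 1 m, ?_, hmU⟩
      have : m ≤ t.sup id := Finset.le_sup (f := id) hmt
      omega
    -- Step 3: uniform bound C
    have hbnd : ∀ m : ℕ, ∃ c : ℝ, ∀ x ∈ Λ, opNorm (prodS S x m) ≤ c := by
      intro m
      obtain ⟨x0, hx0, hx0max⟩ := hcomp.exists_isMaxOn hne
        ((opNorm_continuous.comp (prodS_continuous S hS m)).continuousOn)
      exact ⟨opNorm (prodS S x0 m), fun y hy => hx0max hy⟩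
    choose c hc using hbnd
    set C : ℝ := max 1 ((Finset.range (M + 1)).sup' (by simp) c) with hCdef
    have hC1 : 1 ≤ C := le_max_left _ _
    have hC0 : 0 < C := lt_of_lt_of_le one_pos hC1
    have hcC : ∀ m : ℕ, m ≤ M → ∀ x ∈ Λ, opNorm (prodS S x m) ≤ C := by
      intro m hm x hx
      refine le_trans (hc m x hx) (le_trans ?_ (le_max_right _ _))
      exact Finset.le_sup' c (Finset.mem_range.2 (by omega))
    -- Step 4: key decay estimate
    have key : ∀ n : ℕ, ∀ x ∈ Λ, opNorm (prodS S x n) ≤ C * (1 / 2 : ℝ) ^ (n / M) := by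
      intro n
      induction n using Nat.strong_induction_on with
      | _ n ih =>
        intro x hx
        obtain ⟨m, hm1, hmM, hsm⟩ := cover x hx
        by_cases hmn : m ≤ n
        · have hdecomp : prodS S x n = prodS S (fun k => x (k + m)) (n - m) * prodS S x m := by
            have := prodS_add S x m (n - m)
            rwa [Nat.add_sub_cancel' hmn] at this
          have hx' : (fun k => x (k + m)) ∈ Λ := shift_mem hinv m x hx
          have hlt : n - m < n := Nat.sub_lt (by omega) (by omega)
          have hA := ih (n - m) hlt _ hx'
          have hmul := opNorm_mul_le (prodS S (fun k => x (k + m)) (n - m)) (prodS S x m)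
          rw [hdecomp]
          have h1 : opNorm (prodS S (fun k => x (k + m)) (n - m)) * opNorm (prodS S x m)
              ≤ (C * (1 / 2 : ℝ) ^ ((n - m) / M)) * (1 / 2) := by
            apply mul_le_mul hA hsm.le (opNorm_nonneg _)
            positivity
          refine le_trans hmul (le_trans h1 ?_)
          have hdiv : n / M ≤ (n - m) / M + 1 := by
            have h2 : n ≤ (n - m) + M := by omega
            calc n / M ≤ ((n - m) + M) / M := Nat.div_le_div_right h2
              _ = (n - m) / M + 1 := Nat.add_div_right _ hM0
          have hpow : (1 / 2 : ℝ) ^ (n / M) ≥ (1 / 2 : ℝ) ^ ((n - m) / M + 1) :=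
            pow_le_pow_of_le_one (by norm_num) (by norm_num) hdiv
          calc (C * (1 / 2 : ℝ) ^ ((n - m) / M)) * (1 / 2)
              = C * (1 / 2 : ℝ) ^ ((n - m) / M + 1) := by ring
            _ ≤ C * (1 / 2 : ℝ) ^ (n / M) := by
                apply mul_le_mul_of_nonneg_left hpow hC0.le
        · have hnM : n < M := by omega
          have h0 : n / M = 0 := Nat.div_eq_of_lt hnM
          rw [h0, pow_zero, mul_one]
          exact hcC n hnM.le x hx
    -- Step 5: convert to exponential bound
    set a : ℝ := 1 / 2 with ha
    have ha0 : (0 : ℝ) < a := by norm_num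
    have ha1 : a < 1 := by norm_num
    set l : ℝ := a ^ ((1 : ℝ) / (2 * M)) with hl
    have hl0 : 0 < l := Real.rpow_pos_of_pos ha0 _
    have hl1 : l < 1 := Real.rpow_lt_one ha0.le ha1 (by positivity)
    have hlpow : ∀ n : ℕ, l ^ n = a ^ ((n : ℝ) / (2 * M)) := by
      intro n
      rw [hl, ← Real.rpow_natCast (a ^ ((1 : ℝ) / (2 * M))) n, ← Real.rpow_mul ha0.le]
      congr 1
      field_simp
    -- choose N
    have htend : Filter.Tendsto (fun n : ℕ => l ^ n) atTop (nhds 0) :=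
      tendsto_pow_atTop_nhds_zero_of_lt_one hl0.le hl1
    have hev : ∀ᶠ n : ℕ in atTop, l ^ n ≤ a / C := by
      have : (0 : ℝ) < a / C := by positivity
      exact htend.eventually (Filter.Tendsto.eventually_le_const this tendsto_id)
    obtain ⟨N0, hN0⟩ := eventually_atTop.1 hev
    refine ⟨l, hl0, hl1, max 1 N0, le_max_left _ _, ?_⟩
    intro x hx n hn
    have hln : l ^ n ≤ a / C := hN0 n (le_trans (le_max_right _ _) hn)
    refine le_trans (key n x hx) ?_
    -- show C * a ^ (n / M) ≤ l ^ n
    have hq : ((n / M : ℕ) : ℝ) ≥ (n : ℝ) / M - 1 := by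
      have h2' : n < M * (n / M + 1) := by
        have e := Nat.div_add_mod n M
        have r := Nat.mod_lt n hM0
        calc n = M * (n / M) + n % M := e.symm
          _ < M * (n / M) + M := by omega
          _ = M * (n / M + 1) := by ring
      have h2 : (n : ℝ) < M * ((n / M : ℕ) + 1) := by exact_mod_cast h2'
      have hMpos : (0 : ℝ) < M := by exact_mod_cast hM0
      rw [ge_iff_le, sub_le_iff_le_add, div_le_iff₀ hMpos]
      nlinarith
    have hqb : a ^ (n / M : ℕ) ≤ a ^ ((n : ℝ) / M - 1) := by
      rw [← Real.rpow_natCast a (n / M : ℕ)]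
      exact Real.rpow_le_rpow_of_exponent_ge ha0 ha1.le hq
    have hMpos : (0 : ℝ) < M := by exact_mod_cast hM0
    have hsplit : a ^ ((n : ℝ) / M - 1) = a ^ ((n : ℝ) / (2 * M)) * a ^ ((n : ℝ) / (2 * M)) / a := by
      have hexp : (n : ℝ) / M - 1 = ((n : ℝ) / (2 * M) + (n : ℝ) / (2 * M)) - 1 := by
        field_simp
        ring
      rw [hexp, Real.rpow_sub ha0, Real.rpow_add ha0, Real.rpow_one]
    have hln' : a ^ ((n : ℝ) / (2 * M)) = l ^ n := (hlpow n).symm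
    rw [hsplit, hln'] at hqb
    have hlnn : (0 : ℝ) ≤ l ^ n := by positivity
    have hstep : C * (l ^ n * l ^ n / a) ≤ l ^ n := by
      have h3 : C * l ^ n ≤ a := by
        calc C * l ^ n ≤ C * (a / C) := by
              apply mul_le_mul_of_nonneg_left hln hC0.le
          _ = a := by field_simp
      calc C * (l ^ n * l ^ n / a) = (C * l ^ n) * l ^ n / a := by ring
        _ ≤ a * l ^ n / a := by gcongr
        _ = l ^ n := by field_simp
    calc C * a ^ (n / M : ℕ) ≤ C * (l ^ n * l ^ n / a) := by
          apply mul_le_mul_of_nonneg_left hqb hC0.le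
      _ ≤ l ^ n := hstep
  · -- easy direction
    rintro ⟨l, hl0, hl1, N, hN, hb⟩ x hx
    have hnorm : Filter.Tendsto (fun n : ℕ => opNorm (prodS S x n)) atTop (nhds 0) := by
      apply squeeze_zero' (Filter.Eventually.of_forall fun n => opNorm_nonneg _)
      · exact eventually_atTop.2 ⟨N, fun n hn => hb x hx n hn⟩
      · exact tendsto_pow_atTop_nhds_zero_of_lt_one hl0.le hl1
    have hCLM : Filter.Tendsto (fun n : ℕ => euclidCLM d (prodS S x n)) atTop (nhds 0) := by
      rw [tendsto_zero_iff_norm_tendsto_zero]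
      simpa [opNorm_eq] using hnorm
    have hsymm : Continuous (euclidCLM d).symm :=
      (euclidCLM d).symm.toLinearMap.continuous_of_finiteDimensional
    have h2 : Filter.Tendsto (fun n : ℕ => (euclidCLM d).symm (euclidCLM d (prodS S x n)))
        atTop (nhds ((euclidCLM d).symm 0)) := (hsymm.tendsto 0).comp hCLM
    simpa using h2
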